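/- A real symmetric matrix A is positive semidefinite if and only if the determinants of all principal (symmetric) minors of A are nonnegative. -/

import Mathlib

open Matrix Finset

private lemma det_piecewise_eq {n : ℕ} (A : Matrix (Fin n) (Fin n) ℝ)
    (s : Finset (Fin n)) (x : ℝ) :
    (Matrix.of (s.piecewise A (x • (1 : Matrix (Fin n) (Fin n) ℝ)))).det =
      x ^ (n - s.card) *
        (A.submatrix (fun i : {i // i ∈ s} => (i : Fin n))
          (fun i : {i // i ∈ s} => (i : Fin n))).det := by
  classical
  let e : {i // i ∈ s} ⊕ {i // ¬ i ∈ s} ≃ Fin n := Equiv.sumCompl (· ∈ s)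
  rw [← Matrix.det_submatrix_equiv_self e]
  have hblock :
      (Matrix.of (s.piecewise A (x • (1 : Matrix (Fin n) (Fin n) ℝ)))).submatrix e e =
        Matrix.fromBlocks
          (A.submatrix (fun i : {i // i ∈ s} => (i : Fin n))
            (fun i : {i // i ∈ s} => (i : Fin n)))
          (Matrix.of fun (i : {i // i ∈ s}) (j : {i // ¬ i ∈ s}) => A i j) 0
          (x • (1 : Matrix {i // ¬ i ∈ s} {i // ¬ i ∈ s} ℝ)) := by
    ext i j
    cases i with
    | inl i =>
      cases j with
      | inl j => simp [e, Finset.piecewise, i.2]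
      | inr j => simp [e, Finset.piecewise, i.2]
    | inr i =>
      cases j with
      | inl j =>
        have : (i : Fin n) ≠ (j : Fin n) := by
          intro h
          exact i.2 (h ▸ j.2)
        simp [e, Finset.piecewise, i.2, Matrix.one_apply, this]
      | inr j =>
        have : ((i : Fin n) = (j : Fin n)) ↔ i = j := Subtype.coe_injective.eq_iff
        simp [e, Finset.piecewise, i.2, Matrix.one_apply, this]
  rw [hblock, Matrix.det_fromBlocks_zero₂₁, Matrix.det_smul, Matrix.det_one, mul_one,
    mul_comm]
  congr 2
  rw [Fintype.card_subtype_compl]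
  congr 1
  · exact Fintype.card_fin n
  · exact Fintype.card_coe s

private lemma det_add_smul_one_eq {n : ℕ} (A : Matrix (Fin n) (Fin n) ℝ) (x : ℝ) :
    (A + x • (1 : Matrix (Fin n) (Fin n) ℝ)).det =
      ∑ s : Finset (Fin n),
        x ^ (n - s.card) *
          (A.submatrix (fun i : {i // i ∈ s} => (i : Fin n))
            (fun i : {i // i ∈ s} => (i : Fin n))).det := by
  classical
  have h1 : (A + x • (1 : Matrix (Fin n) (Fin n) ℝ)).det =
      ∑ s : Finset (Fin n),
        (Matrix.of (s.piecewise A (x • (1 : Matrix (Fin n) (Fin n) ℝ)))).det :=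
    (Matrix.detRowAlternating :
      (Fin n → ℝ) [⋀^Fin n]→ₗ[ℝ] ℝ).toMultilinearMap.map_add_univ A
        (x • (1 : Matrix (Fin n) (Fin n) ℝ))
  rw [h1]
  exact Finset.sum_congr rfl fun s _ => det_piecewise_eq A s x

private lemma posSemidef_det_nonneg {m : Type*} [Fintype m] [DecidableEq m]
    {M : Matrix m m ℝ} (hM : M.PosSemidef) : 0 ≤ M.det := by
  rw [hM.isHermitian.det_eq_prod_eigenvalues]
  exact Finset.prod_nonneg fun i _ => hM.eigenvalues_nonneg i

/-- A real symmetric matrix is positive semidefinite if and only if the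
determinants of all its principal (symmetric) minors are nonnegative. -/
theorem posSemidef_iff_principal_minors (n : ℕ)
    (A : Matrix (Fin n) (Fin n) ℝ) (hA : A.IsSymm) :
    A.PosSemidef ↔
      ∀ s : Finset (Fin n),
        0 ≤ (A.submatrix (fun i : {i // i ∈ s} => (i : Fin n))
              (fun i : {i // i ∈ s} => (i : Fin n))).det := by
  classical
  constructor
  · intro h s
    exact posSemidef_det_nonneg (h.submatrix _)
  · intro h
    have hH : A.IsHermitian := by
      rwa [Matrix.IsHermitian, conjTranspose_eq_transpose_of_trivial]
    refine hH.posSemidef_iff_eigenvalues_nonneg.mpr fun i => show (0 : ℝ) ≤ hH.eigenvalues i from ?_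
    by_contra hlt
    push_neg at hlt
    set x : ℝ := -hH.eigenvalues i with hx
    have hx0 : 0 < x := by simp [hx]; linarith
    -- the matrix A + x • 1 is singular since -x is an eigenvalue of A
    have hdet0 : (A + x • (1 : Matrix (Fin n) (Fin n) ℝ)).det = 0 := by
      rw [← Matrix.exists_mulVec_eq_zero_iff]
      refine ⟨⇑(hH.eigenvectorBasis i), by simpa using hH.eigenvectorBasis.orthonormal.ne_zero i, ?_⟩
      rw [Matrix.add_mulVec, Matrix.smul_mulVec, Matrix.one_mulVec,
        hH.mulVec_eigenvectorBasis, hx, neg_smul, add_neg_cancel]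
    -- but it has positive determinant by the principal minor expansion
    have hpos : 0 < (A + x • (1 : Matrix (Fin n) (Fin n) ℝ)).det := by
      rw [det_add_smul_one_eq]
      have hterm : ∀ s : Finset (Fin n), s ∈ (Finset.univ : Finset (Finset (Fin n))) →
          0 ≤ x ^ (n - s.card) *
            (A.submatrix (fun i : {i // i ∈ s} => (i : Fin n))
              (fun i : {i // i ∈ s} => (i : Fin n))).det :=
        fun s _ => mul_nonneg (pow_nonneg hx0.le _) (h s)
      have hmem : (∅ : Finset (Fin n)) ∈ (Finset.univ : Finset (Finset (Fin n))) :=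
        Finset.mem_univ _
      have hle := Finset.single_le_sum hterm hmem
      have hempty : (0 : ℝ) < x ^ (n - (∅ : Finset (Fin n)).card) *
          (A.submatrix (fun i : {i // i ∈ (∅ : Finset (Fin n))} => (i : Fin n))
            (fun i : {i // i ∈ (∅ : Finset (Fin n))} => (i : Fin n))).det := by
        have : IsEmpty {i // i ∈ (∅ : Finset (Fin n))} := by
          constructor; rintro ⟨i, hi⟩; exact absurd hi (Finset.notMem_empty i)
        rw [Matrix.det_isEmpty, mul_one]
        exact pow_pos hx0 _
      linarith
    rw [hdet0] at hpos
    exact lt_irrefl 0 hpos
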